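/- arXiv:2211.12633 — 2 statements merged into one kernel-verified Lean document; each statement's English description precedes it below -/
import Mathlib

section
/- Let V be a real Banach space, W ⊆ V a closed subspace, m, N ∈ ℕ, w = (w_j)_{j=1}^N positive weights and k > 0. Suppose the matrix A ∈ ℝ^{m×N}, regarded as an operator W^N → W^m, has the weighted robust null space property over W of order (k,w) with constants 0 ≤ ρ < 1 and γ > 0. Let x ∈ W^N, f ∈ V^m, e := A x − f, and let 0 < λ ≤ (1+ρ)²/((3+ρ)γ√k). Define G(z) := λ‖z‖_{1,w;V} + ‖A z − f‖_{2;V} for z ∈ W^N. Then for every x̃ ∈ W^N, ‖x̃ − x‖_{1,w;V} ≤ C₁·(2σ_k(x)_{1,w;V} + (G(x̃) − G(x))/λ) + (C₁/λ + C₂√k)·‖e‖_{2;V}, where C₁ = (1+ρ)/(1−ρ) and C₂ = 2γ/(1−ρ). -/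
open Finset

/-- The ℓ²-norm `‖x‖_{2;V}` of a tuple `x ∈ V^N`. -/
noncomputable def norm2V {V : Type*} [NormedAddCommGroup V] {N : ℕ} (x : Fin N → V) : ℝ :=
  Real.sqrt (∑ j, ‖x j‖ ^ 2)

/-- The weighted ℓ¹-norm `‖x‖_{1,w;V}` of a tuple `x ∈ V^N`. -/
noncomputable def norm1wV {V : Type*} [NormedAddCommGroup V] {N : ℕ} (w : Fin N → ℝ)
    (x : Fin N → V) : ℝ :=
  ∑ j, w j * ‖x j‖

/-- The action of a matrix `A ∈ ℝ^{m×N}` on `V^N`, giving an element of `V^m`. -/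
noncomputable def matVec {V : Type*} [NormedAddCommGroup V] [NormedSpace ℝ V] {m N : ℕ}
    (A : Matrix (Fin m) (Fin N) ℝ) (x : Fin N → V) : Fin m → V :=
  fun i => ∑ j, A i j • x j

/-- `x_S`: the vector agreeing with `x` on `S` and vanishing outside `S`. -/
noncomputable def restrictTo {V : Type*} [NormedAddCommGroup V] {N : ℕ} (x : Fin N → V)
    (S : Finset (Fin N)) : Fin N → V :=
  fun j => if j ∈ S then x j else 0

/-- The weighted cardinality `|S|_w = Σ_{j∈S} w_j²`. -/
def wCard {N : ℕ} (w : Fin N → ℝ) (S : Finset (Fin N)) : ℝ :=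
  ∑ j ∈ S, w j ^ 2

/-- `A` has the weighted robust null space property over the subset `W ⊆ V`
of order `(k, w)` with constants `ρ` and `γ`. -/
def WRNSP {V : Type*} [NormedAddCommGroup V] [NormedSpace ℝ V] {m N : ℕ}
    (A : Matrix (Fin m) (Fin N) ℝ) (W : Set V) (k : ℝ) (w : Fin N → ℝ) (ρ γ : ℝ) : Prop :=
  ∀ x : Fin N → V, (∀ j, x j ∈ W) → ∀ S : Finset (Fin N), wCard w S ≤ k →
    norm2V (restrictTo x S) ≤
      ρ / Real.sqrt k * norm1wV w (restrictTo x Sᶜ) + γ * norm2V (matVec A x)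

/-- The weighted best `(k,w)`-term approximation error `σ_k(x)_{1,w;V}`. -/
noncomputable def sigmaK {V : Type*} [NormedAddCommGroup V] {N : ℕ} (w : Fin N → ℝ) (k : ℝ)
    (x : Fin N → V) : ℝ :=
  sInf {t : ℝ | ∃ S : Finset (Fin N), wCard w S ≤ k ∧ t = norm1wV w (restrictTo x Sᶜ)}

lemma norm1wV_restrict {V : Type*} [NormedAddCommGroup V] {N : ℕ} (w : Fin N → ℝ)
    (y : Fin N → V) (S : Finset (Fin N)) :
    norm1wV w (restrictTo y S) = ∑ j ∈ S, w j * ‖y j‖ := by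
  unfold norm1wV restrictTo
  calc ∑ j : Fin N, w j * ‖if j ∈ S then y j else 0‖
      = ∑ j : Fin N, (if j ∈ S then w j * ‖y j‖ else 0) := by
        refine Finset.sum_congr rfl fun j _ => ?_; split_ifs <;> simp
    _ = ∑ j ∈ S, w j * ‖y j‖ := by rw [Finset.sum_ite_mem, Finset.univ_inter]

lemma norm2V_restrict {V : Type*} [NormedAddCommGroup V] {N : ℕ}
    (y : Fin N → V) (S : Finset (Fin N)) :
    norm2V (restrictTo y S) = Real.sqrt (∑ j ∈ S, ‖y j‖ ^ 2) := by
  unfold norm2V restrictTo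
  congr 1
  calc ∑ j : Fin N, ‖if j ∈ S then y j else 0‖ ^ 2
      = ∑ j : Fin N, (if j ∈ S then ‖y j‖ ^ 2 else 0) := by
        refine Finset.sum_congr rfl fun j _ => ?_; split_ifs <;> simp
    _ = ∑ j ∈ S, ‖y j‖ ^ 2 := by rw [Finset.sum_ite_mem, Finset.univ_inter]

lemma cauchy_schwarz_w {V : Type*} [NormedAddCommGroup V] {N : ℕ} (w : Fin N → ℝ)
    (hw : ∀ j, 0 < w j) (y : Fin N → V) (S : Finset (Fin N)) :
    ∑ j ∈ S, w j * ‖y j‖ ≤ Real.sqrt (wCard w S) * Real.sqrt (∑ j ∈ S, ‖y j‖ ^ 2) := by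
  have h := Finset.sum_mul_sq_le_sq_mul_sq S w (fun j => ‖y j‖)
  have hnn : 0 ≤ ∑ j ∈ S, w j * ‖y j‖ :=
    Finset.sum_nonneg fun j _ => mul_nonneg (hw j).le (norm_nonneg _)
  calc ∑ j ∈ S, w j * ‖y j‖ = Real.sqrt ((∑ j ∈ S, w j * ‖y j‖) ^ 2) := (Real.sqrt_sq hnn).symm
    _ ≤ Real.sqrt ((∑ j ∈ S, w j ^ 2) * ∑ j ∈ S, ‖y j‖ ^ 2) := Real.sqrt_le_sqrt h
    _ = _ := Real.sqrt_mul (Finset.sum_nonneg fun j _ => sq_nonneg _) _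

lemma norm2V_sub_le {V : Type*} [NormedAddCommGroup V] {m : ℕ} (p q : Fin m → V) :
    norm2V (fun i => p i - q i) ≤ norm2V p + norm2V q := by
  set u : EuclideanSpace ℝ (Fin m) := (WithLp.equiv 2 (Fin m → ℝ)).symm (fun i => ‖p i‖) with hu'
  set v : EuclideanSpace ℝ (Fin m) := (WithLp.equiv 2 (Fin m → ℝ)).symm (fun i => ‖q i‖) with hv'
  have hu : ‖u‖ = norm2V p := by
    rw [EuclideanSpace.norm_eq]
    unfold norm2V
    congr 1
    refine Finset.sum_congr rfl fun i _ => ?_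
    simp [hu', WithLp.equiv_symm_apply, PiLp.toLp_apply]
  have hv : ‖v‖ = norm2V q := by
    rw [EuclideanSpace.norm_eq]
    unfold norm2V
    congr 1
    refine Finset.sum_congr rfl fun i _ => ?_
    simp [hv', WithLp.equiv_symm_apply, PiLp.toLp_apply]
  have h : norm2V (fun i => p i - q i) ≤ ‖u + v‖ := by
    rw [EuclideanSpace.norm_eq]
    unfold norm2V
    apply Real.sqrt_le_sqrt
    apply Finset.sum_le_sum
    intro i _
    have h2 : (u + v) i = ‖p i‖ + ‖q i‖ := by
      simp [hu', hv', PiLp.add_apply, WithLp.equiv_symm_apply, PiLp.toLp_apply]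
    rw [h2]
    simp only [Real.norm_eq_abs, sq_abs]
    have h1 : ‖p i - q i‖ ≤ ‖p i‖ + ‖q i‖ := norm_sub_le _ _
    nlinarith [norm_nonneg (p i), norm_nonneg (q i), norm_nonneg (p i - q i)]
  calc norm2V (fun i => p i - q i) ≤ ‖u + v‖ := h
    _ ≤ ‖u‖ + ‖v‖ := norm_add_le _ _
    _ = norm2V p + norm2V q := by rw [hu, hv]

lemma matVec_sub {V : Type*} [NormedAddCommGroup V] [NormedSpace ℝ V] {m N : ℕ}
    (A : Matrix (Fin m) (Fin N) ℝ) (y z : Fin N → V) :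
    matVec A (fun j => y j - z j) = fun i => matVec A y i - matVec A z i := by
  funext i
  simp [matVec, smul_sub, Finset.sum_sub_distrib]

set_option maxHeartbeats 1000000 in
/-- Lemma 6.1 (weighted rNSP implies error bounds for inexact minimizers), `ℓ¹_w`-bound. -/
theorem wrNSP_error_bound_l1w
    {V : Type*} [NormedAddCommGroup V] [NormedSpace ℝ V] [CompleteSpace V]
    (W : Subspace ℝ V) (hWclosed : IsClosed (W : Set V))
    {m N : ℕ} (A : Matrix (Fin m) (Fin N) ℝ)
    (w : Fin N → ℝ) (hw : ∀ j, 0 < w j)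
    (k : ℝ) (hk : 0 < k)
    (ρ γ : ℝ) (hρ0 : 0 ≤ ρ) (hρ1 : ρ < 1) (hγ : 0 < γ)
    (hA : WRNSP A (W : Set V) k w ρ γ)
    (x : Fin N → V) (hx : ∀ j, x j ∈ W)
    (f : Fin m → V)
    (e : Fin m → V) (he : e = fun i => matVec A x i - f i)
    (lam : ℝ) (hlam0 : 0 < lam)
    (hlam : lam ≤ (1 + ρ) ^ 2 / ((3 + ρ) * γ * Real.sqrt k))
    (G : (Fin N → V) → ℝ)
    (hG : ∀ z, G z = lam * norm1wV w z + norm2V (fun i => matVec A z i - f i))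
    (xt : Fin N → V) (hxt : ∀ j, xt j ∈ W) :
    norm1wV w (fun j => xt j - x j) ≤
      (1 + ρ) / (1 - ρ) * (2 * sigmaK w k x + (G xt - G x) / lam)
        + ((1 + ρ) / (1 - ρ) / lam + 2 * γ / (1 - ρ) * Real.sqrt k) * norm2V e := by
  -- abbreviations
  obtain ⟨K, hK'⟩ : ∃ t, t = Real.sqrt k := ⟨_, rfl⟩
  rw [← hK']
  rw [← hK'] at hlam
  have hlamne : lam ≠ 0 := ne_of_gt hlam0
  have hKpos : 0 < K := hK' ▸ Real.sqrt_pos.mpr hk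
  have h1ρ : (0:ℝ) < 1 - ρ := by linarith
  have h1ρne : (1:ℝ) - ρ ≠ 0 := ne_of_gt h1ρ
  have h1ρ' : (0:ℝ) < 1 + ρ := by linarith
  obtain ⟨v, hv'⟩ : ∃ t : Fin N → V, t = fun j => xt j - x j := ⟨_, rfl⟩
  rw [← hv']
  obtain ⟨E, hE'⟩ : ∃ t, t = norm2V e := ⟨_, rfl⟩
  rw [← hE']
  have hEnn : 0 ≤ E := by rw [hE']; exact Real.sqrt_nonneg _
  obtain ⟨u, hu'⟩ : ∃ t, t = norm2V (fun i => matVec A xt i - f i) := ⟨_, rfl⟩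
  have hunn : 0 ≤ u := by rw [hu']; exact Real.sqrt_nonneg _
  obtain ⟨D, hD'⟩ : ∃ t, t = norm1wV w xt - norm1wV w x := ⟨_, rfl⟩
  obtain ⟨σk, hσk'⟩ : ∃ t, t = sigmaK w k x := ⟨_, rfl⟩
  rw [← hσk']
  -- the key bound on lam : 2 γ K lam ≤ 1 + ρ
  have hden : (0:ℝ) < (3 + ρ) * γ * K := by positivity
  have hlam' : lam * ((3 + ρ) * γ * K) ≤ (1 + ρ) ^ 2 := (le_div_iff₀ hden).mp hlam
  have hL : 2 * γ * K * lam ≤ 1 + ρ := by nlinarith [hlam', hρ0, hρ1, hγ, hKpos, hlam0]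
  -- G values
  have hg : G xt - G x = lam * D + u - E := by
    rw [hG xt, hG x, hE', he, hD', hu']
    ring
  -- bound ‖A v‖₂ ≤ u + E
  have hAv : norm2V (matVec A v) ≤ u + E := by
    have hlin : matVec A v = fun i => (matVec A xt i - f i) - (matVec A x i - f i) := by
      rw [hv', matVec_sub]
      funext i
      show matVec A xt i - matVec A x i = (matVec A xt i - f i) - (matVec A x i - f i)
      abel
    rw [hlin]
    have := norm2V_sub_le (fun i => matVec A xt i - f i) (fun i => matVec A x i - f i)
    rw [hu', hE', he]
    exact this
  -- v is in W componentwise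
  have hvW : ∀ j, v j ∈ (W : Set V) := by
    intro j
    rw [hv']
    exact W.sub_mem (hxt j) (hx j)
  -- εification
  have key : ∀ ε : ℝ, 0 < ε → norm1wV w v ≤
      (1 + ρ) / (1 - ρ) * (2 * σk + (G xt - G x) / lam)
        + ((1 + ρ) / (1 - ρ) / lam + 2 * γ / (1 - ρ) * K) * E + ε := by
    intro ε hε
    obtain ⟨δ, hδ'⟩ : ∃ t, t = (1 - ρ) / (2 * (1 + ρ)) * ε := ⟨_, rfl⟩
    have hδpos : 0 < δ := by rw [hδ']; positivity
    -- choose a near-optimal S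
    have hne : {t : ℝ | ∃ S : Finset (Fin N), wCard w S ≤ k ∧ t = norm1wV w (restrictTo x Sᶜ)}.Nonempty := by
      refine ⟨norm1wV w (restrictTo x (∅ : Finset (Fin N))ᶜ), ⟨∅, ?_, rfl⟩⟩
      simp [wCard]
      exact hk.le
    obtain ⟨t, ⟨S, hSk, ht⟩, htlt⟩ := Real.lt_sInf_add_pos hne hδpos
    have hσs : norm1wV w (restrictTo x Sᶜ) < σk + δ := by
      rw [hσk']
      unfold sigmaK
      rw [← ht]
      exact htlt
    obtain ⟨a, ha'⟩ : ∃ t, t = ∑ j ∈ Sᶜ, w j * ‖v j‖ := ⟨_, rfl⟩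
    obtain ⟨b, hb'⟩ : ∃ t, t = ∑ j ∈ S, w j * ‖v j‖ := ⟨_, rfl⟩
    obtain ⟨σs, hσs'⟩ : ∃ t, t = ∑ j ∈ Sᶜ, w j * ‖x j‖ := ⟨_, rfl⟩
    have hσs2 : σs < σk + δ := by
      rw [hσs', ← norm1wV_restrict]
      exact hσs
    have hsum : norm1wV w v = b + a := by
      rw [norm1wV, ha', hb']
      exact (Finset.sum_add_sum_compl S _).symm
    have hann : 0 ≤ a := by
      rw [ha']
      exact Finset.sum_nonneg fun j _ => mul_nonneg (hw j).le (norm_nonneg _)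
    have hbnn : 0 ≤ b := by
      rw [hb']
      exact Finset.sum_nonneg fun j _ => mul_nonneg (hw j).le (norm_nonneg _)
    -- (1) b ≤ ρ a + γ K (u + E)
    have hNSP := hA v hvW S hSk
    rw [← hK'] at hNSP
    rw [norm1wV_restrict, norm2V_restrict, ← ha'] at hNSP
    have hCS : b ≤ Real.sqrt (wCard w S) * Real.sqrt (∑ j ∈ S, ‖v j‖ ^ 2) := by
      rw [hb']; exact cauchy_schwarz_w w hw v S
    have hWK : Real.sqrt (wCard w S) ≤ K := hK' ▸ Real.sqrt_le_sqrt hSk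
    have h1 : b ≤ ρ * a + γ * K * (u + E) := by
      have hsq : 0 ≤ Real.sqrt (∑ j ∈ S, ‖v j‖ ^ 2) := Real.sqrt_nonneg _
      have step1 : b ≤ K * Real.sqrt (∑ j ∈ S, ‖v j‖ ^ 2) :=
        hCS.trans (mul_le_mul_of_nonneg_right hWK hsq)
      have step2 : K * Real.sqrt (∑ j ∈ S, ‖v j‖ ^ 2) ≤ K * (ρ / K * a + γ * norm2V (matVec A v)) :=
        mul_le_mul_of_nonneg_left hNSP hKpos.le
      have hcancel : K * (ρ / K * a + γ * norm2V (matVec A v))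
          = ρ * a + γ * K * norm2V (matVec A v) := by
        field_simp
      have step3 : γ * K * norm2V (matVec A v) ≤ γ * K * (u + E) :=
        mul_le_mul_of_nonneg_left hAv (by positivity)
      calc b ≤ K * Real.sqrt (∑ j ∈ S, ‖v j‖ ^ 2) := step1
        _ ≤ K * (ρ / K * a + γ * norm2V (matVec A v)) := step2
        _ = ρ * a + γ * K * norm2V (matVec A v) := hcancel
        _ ≤ ρ * a + γ * K * (u + E) := by linarith
    -- (2) a ≤ D + 2 σs + b
    have h2 : a ≤ D + 2 * σs + b := by
      have htri1 : a ≤ (∑ j ∈ Sᶜ, w j * ‖xt j‖) + σs := by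
        rw [ha', hσs', ← Finset.sum_add_distrib]
        apply Finset.sum_le_sum
        intro j _
        have : ‖v j‖ ≤ ‖xt j‖ + ‖x j‖ := by rw [hv']; exact norm_sub_le (xt j) (x j)
        nlinarith [hw j, this]
      have htri2 : ∑ j ∈ S, w j * ‖x j‖ ≤ (∑ j ∈ S, w j * ‖xt j‖) + b := by
        rw [hb', ← Finset.sum_add_distrib]
        apply Finset.sum_le_sum
        intro j _
        have hxj : ‖x j‖ ≤ ‖xt j‖ + ‖v j‖ := by
          have h0 : x j = xt j - v j := by rw [hv']; show x j = xt j - (xt j - x j); abel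
          rw [h0]
          exact norm_sub_le _ _
        nlinarith [hw j, hxj]
      have hsx : norm1wV w x = (∑ j ∈ S, w j * ‖x j‖) + σs := by
        rw [norm1wV, hσs']
        exact (Finset.sum_add_sum_compl S _).symm
      have hsxt : norm1wV w xt = (∑ j ∈ S, w j * ‖xt j‖) + ∑ j ∈ Sᶜ, w j * ‖xt j‖ := by
        rw [norm1wV]
        exact (Finset.sum_add_sum_compl S _).symm
      rw [hD']
      linarith
    -- master inequality
    have h2' := mul_le_mul_of_nonneg_left h2 h1ρ'.le
    have h3 : (1 - ρ) * (b + a) ≤ (1 + ρ) * (D + 2 * σs) + 2 * (γ * K * (u + E)) := by nlinarith [h1, h2']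
    have hM : b + a ≤ ((1 + ρ) * (D + 2 * σs) + 2 * (γ * K * (u + E))) / (1 - ρ) :=
      (le_div_iff₀' h1ρ).mpr h3
    -- compare coefficients of u
    have hu2 : 2 * γ * K / (1 - ρ) * u ≤ (1 + ρ) / (1 - ρ) / lam * u := by
      apply mul_le_mul_of_nonneg_right _ hunn
      rw [div_div, div_le_div_iff₀ h1ρ (by positivity : (0:ℝ) < (1 - ρ) * lam)]
      nlinarith [hL, h1ρ]
    -- σs bound scaled
    have hσ3 : (1 + ρ) / (1 - ρ) * (2 * σs) ≤ (1 + ρ) / (1 - ρ) * (2 * σk) + ε := by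
      have hC : 0 < (1 + ρ) / (1 - ρ) := by positivity
      have := mul_le_mul_of_nonneg_left hσs2.le hC.le
      have hδeq : (1 + ρ) / (1 - ρ) * (2 * δ) = ε := by
        rw [hδ']
        field_simp
      linarith [this, hδeq]
    -- rewrite the goal RHS
    have hq : (1 + ρ) / (1 - ρ) * (2 * σk + (G xt - G x) / lam)
        + ((1 + ρ) / (1 - ρ) / lam + 2 * γ / (1 - ρ) * K) * E
        = (1 + ρ) / (1 - ρ) * (2 * σk + D) + (1 + ρ) / (1 - ρ) / lam * u
          + 2 * γ / (1 - ρ) * K * E := by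
      rw [hg]
      field_simp
      ring
    rw [hsum, hq]
    have hMexp : b + a ≤ (1 + ρ) / (1 - ρ) * D + (1 + ρ) / (1 - ρ) * (2 * σs)
        + 2 * γ * K / (1 - ρ) * u + 2 * γ * K / (1 - ρ) * E := by
      calc b + a ≤ ((1 + ρ) * (D + 2 * σs) + 2 * (γ * K * (u + E))) / (1 - ρ) := hM
        _ = (1 + ρ) / (1 - ρ) * D + (1 + ρ) / (1 - ρ) * (2 * σs)
            + 2 * γ * K / (1 - ρ) * u + 2 * γ * K / (1 - ρ) * E := by
          field_simp
          ring
    have hEterm : 2 * γ * K / (1 - ρ) * E = 2 * γ / (1 - ρ) * K * E := by ring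
    linarith [hMexp, hu2, hσ3]
  -- close the ε
  by_contra hcon
  push_neg at hcon
  have h := key ((norm1wV w v - ((1 + ρ) / (1 - ρ) * (2 * σk + (G xt - G x) / lam)
      + ((1 + ρ) / (1 - ρ) / lam + 2 * γ / (1 - ρ) * K) * E)) / 2) (by linarith)
  linarith
end

section
/- Let V be a real Banach space, W ⊆ V a closed subspace, m, N ∈ ℕ, w = (w_j)_{j=1}^N positive weights and k > 0. Suppose the matrix A ∈ ℝ^{m×N}, regarded as an operator W^N → W^m, has the weighted robust null space property over W of order (k,w) with constants 0 ≤ ρ < 1 and γ > 0. Let x ∈ W^N, f ∈ V^m, e := A x − f, and let 0 < λ ≤ (1+ρ)²/((3+ρ)γ√k). Define G(z) := λ‖z‖_{1,w;V} + ‖A z − f‖_{2;V} for z ∈ W^N. Then for every x̃ ∈ W^N, ‖x̃ − x‖_{2;V} ≤ (C₁′/√k)·(2σ_k(x)_{1,w;V} + (G(x̃) − G(x))/λ) + (C₁′/(√k·λ) + C₂′)·‖e‖_{2;V}, where C₁′ = (1+ρ)²/(1−ρ) and C₂′ = (3+ρ)γ/(1−ρ). -/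
open Finset

section helpers
variable {V : Type*} [NormedAddCommGroup V] {N : ℕ}

lemma norm2V_nonneg (x : Fin N → V) : 0 ≤ norm2V x := Real.sqrt_nonneg _

lemma norm1wV_nonneg {w : Fin N → ℝ} (hw : ∀ j, 0 ≤ w j) (x : Fin N → V) :
    0 ≤ norm1wV w x :=
  Finset.sum_nonneg fun j _ => mul_nonneg (hw j) (norm_nonneg _)

lemma norm2V_triangle (x y : Fin N → V) :
    norm2V (fun j => x j + y j) ≤ norm2V x + norm2V y := by
  have h1 : norm2V (fun j => x j + y j) ≤ Real.sqrt (∑ j, (‖x j‖ + ‖y j‖) ^ 2) := by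
    apply Real.sqrt_le_sqrt
    apply Finset.sum_le_sum
    intro j _
    have h := norm_add_le (x j) (y j)
    nlinarith [norm_nonneg (x j + y j)]
  refine h1.trans ?_
  set u : EuclideanSpace ℝ (Fin N) := WithLp.toLp 2 (fun j => ‖x j‖) with hu
  set v : EuclideanSpace ℝ (Fin N) := WithLp.toLp 2 (fun j => ‖y j‖) with hv
  have hnu : ‖u‖ = norm2V x := by
    rw [EuclideanSpace.norm_eq]
    unfold norm2V
    congr 1
    refine Finset.sum_congr rfl fun j _ => ?_
    simp [hu, Real.norm_eq_abs, sq_abs]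
  have hnv : ‖v‖ = norm2V y := by
    rw [EuclideanSpace.norm_eq]
    unfold norm2V
    congr 1
    refine Finset.sum_congr rfl fun j _ => ?_
    simp [hv, Real.norm_eq_abs, sq_abs]
  have huv : Real.sqrt (∑ j, (‖x j‖ + ‖y j‖) ^ 2) = ‖u + v‖ := by
    rw [EuclideanSpace.norm_eq]
    congr 1
    refine Finset.sum_congr rfl fun j _ => ?_
    have : (u + v) j = ‖x j‖ + ‖y j‖ := rfl
    rw [this, Real.norm_eq_abs, sq_abs]
  rw [huv, ← hnu, ← hnv]
  exact norm_add_le u v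

lemma norm1w_restrict (w : Fin N → ℝ) (x : Fin N → V) (S : Finset (Fin N)) :
    norm1wV w (restrictTo x S) = ∑ j ∈ S, w j * ‖x j‖ := by
  unfold norm1wV restrictTo
  simp only [apply_ite norm, norm_zero, mul_ite, mul_zero]
  rw [Finset.sum_ite_mem, Finset.univ_inter]

lemma norm2sq_restrict (x : Fin N → V) (S : Finset (Fin N)) :
    ∑ j, ‖restrictTo x S j‖ ^ 2 = ∑ j ∈ S, ‖x j‖ ^ 2 := by
  unfold restrictTo
  rw [← Finset.sum_add_sum_compl S (fun j => ‖if j ∈ S then x j else 0‖ ^ 2)]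
  have h2 : ∀ j ∈ Sᶜ, ‖if j ∈ S then x j else 0‖ ^ 2 = 0 := by
    intro j hj; rw [if_neg (Finset.mem_compl.mp hj)]; simp
  rw [Finset.sum_eq_zero h2, add_zero]
  exact Finset.sum_congr rfl fun j hj => by rw [if_pos hj]

lemma norm1w_split (w : Fin N → ℝ) (x : Fin N → V) (S : Finset (Fin N)) :
    norm1wV w x = norm1wV w (restrictTo x S) + norm1wV w (restrictTo x Sᶜ) := by
  rw [norm1w_restrict, norm1w_restrict, Finset.sum_add_sum_compl]
  rfl

lemma norm2V_split (x : Fin N → V) (S : Finset (Fin N)) :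
    norm2V x ≤ norm2V (restrictTo x S) + norm2V (restrictTo x Sᶜ) := by
  have hx : x = fun j => restrictTo x S j + restrictTo x Sᶜ j := by
    funext j
    by_cases h : j ∈ S <;> simp [restrictTo, Finset.mem_compl, h]
  conv_lhs => rw [hx]
  exact norm2V_triangle _ _

end helpers

lemma claimB {V : Type*} [NormedAddCommGroup V] [NormedSpace ℝ V] {m N : ℕ}
    (A : Matrix (Fin m) (Fin N) ℝ) (W : Set V)
    (w : Fin N → ℝ) (hw : ∀ j, 0 < w j) (k : ℝ) (hk : 0 < k)
    (ρ γ : ℝ) (hρ0 : 0 ≤ ρ) (hγ : 0 ≤ γ)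
    (hA : WRNSP A W k w ρ γ)
    (v : Fin N → V) (hv : ∀ j, v j ∈ W) :
    norm2V v ≤ (1 + ρ) / Real.sqrt k * norm1wV w v + γ * norm2V (matVec A v) := by
  set T := norm1wV w v with hTdef
  have hT0 : 0 ≤ T := norm1wV_nonneg (fun j => (hw j).le) v
  have hsk : 0 < Real.sqrt k := Real.sqrt_pos.mpr hk
  rcases eq_or_lt_of_le hT0 with hT0' | hTpos
  · -- T = 0, hence v = 0
    have hv0 : ∀ j, ‖v j‖ ^ 2 = 0 := by
      intro j
      have h := (Finset.sum_eq_zero_iff_of_nonneg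
        (fun i (_ : i ∈ Finset.univ) => mul_nonneg (hw i).le (norm_nonneg (v i)))).mp
        hT0'.symm j (Finset.mem_univ j)
      have : ‖v j‖ = 0 := by
        rcases mul_eq_zero.mp h with h' | h'
        · exact absurd h' (ne_of_gt (hw j))
        · exact h'
      simp [this]
    have h2 : norm2V v = 0 := by
      unfold norm2V
      rw [Finset.sum_eq_zero fun j _ => hv0 j]
      simp
    rw [h2, ← hT0', mul_zero, zero_add]
    exact mul_nonneg hγ (norm2V_nonneg _)
  · -- T > 0
    set t := T / k with htdef
    have htpos : 0 < t := div_pos hTpos hk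
    set S := Finset.univ.filter (fun j => t * w j < ‖v j‖) with hSdef
    have hSk : wCard w S ≤ k := by
      have h1 : t * wCard w S ≤ T := by
        calc t * wCard w S = ∑ j ∈ S, t * w j ^ 2 := by rw [wCard, Finset.mul_sum]
          _ ≤ ∑ j ∈ S, w j * ‖v j‖ := by
              apply Finset.sum_le_sum
              intro j hj
              have hj' : t * w j < ‖v j‖ := (Finset.mem_filter.mp hj).2
              nlinarith [hw j]
          _ ≤ ∑ j, w j * ‖v j‖ := by
              apply Finset.sum_le_sum_of_subset_of_nonneg (Finset.subset_univ S)
              intro j _ _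
              exact mul_nonneg (hw j).le (norm_nonneg _)
          _ = T := rfl
      have hTk : T = t * k := by rw [htdef, div_mul_cancel₀ T hk.ne']
      rw [hTk] at h1
      exact le_of_mul_le_mul_left h1 htpos
    have hScl : norm2V (restrictTo v Sᶜ) ≤ T / Real.sqrt k := by
      have hsum : ∑ j, ‖restrictTo v Sᶜ j‖ ^ 2 ≤ t * T := by
        rw [norm2sq_restrict]
        calc ∑ j ∈ Sᶜ, ‖v j‖ ^ 2 ≤ ∑ j ∈ Sᶜ, t * (w j * ‖v j‖) := by
              apply Finset.sum_le_sum
              intro j hj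
              have hj' : ¬ (t * w j < ‖v j‖) := by
                have := Finset.mem_compl.mp hj
                simpa [hSdef] using this
              push_neg at hj'
              nlinarith [norm_nonneg (v j)]
          _ = t * ∑ j ∈ Sᶜ, w j * ‖v j‖ := by rw [Finset.mul_sum]
          _ ≤ t * T := by
              apply mul_le_mul_of_nonneg_left _ htpos.le
              apply Finset.sum_le_sum_of_subset_of_nonneg (Finset.subset_univ _)
              intro j _ _
              exact mul_nonneg (hw j).le (norm_nonneg _)
      have htT : t * T = T ^ 2 / k := by rw [htdef]; ring
      calc norm2V (restrictTo v Sᶜ) ≤ Real.sqrt (t * T) := Real.sqrt_le_sqrt hsum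
        _ = T / Real.sqrt k := by
            rw [htT, Real.sqrt_div (sq_nonneg T), Real.sqrt_sq hT0]
    have hNSP := hA v hv S hSk
    have h3 : norm1wV w (restrictTo v Sᶜ) ≤ T := by
      rw [norm1w_restrict]
      apply Finset.sum_le_sum_of_subset_of_nonneg (Finset.subset_univ _)
      intro j _ _
      exact mul_nonneg (hw j).le (norm_nonneg _)
    have hc : ρ / Real.sqrt k * norm1wV w (restrictTo v Sᶜ) ≤ ρ / Real.sqrt k * T :=
      mul_le_mul_of_nonneg_left h3 (by positivity)
    have hsplit := norm2V_split v S
    have hre : (1 + ρ) / Real.sqrt k * T = ρ / Real.sqrt k * T + T / Real.sqrt k := by ring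
    linarith

lemma claimA {V : Type*} [NormedAddCommGroup V] [NormedSpace ℝ V] {m N : ℕ}
    (A : Matrix (Fin m) (Fin N) ℝ) (W : Set V)
    (w : Fin N → ℝ) (hw : ∀ j, 0 < w j) (k : ℝ) (hk : 0 < k)
    (ρ γ : ℝ) (hρ0 : 0 ≤ ρ) (hρ1 : ρ < 1) (hγ : 0 ≤ γ)
    (hA : WRNSP A W k w ρ γ)
    (S : Finset (Fin N)) (hS : wCard w S ≤ k)
    (x xt : Fin N → V) (hv : ∀ j, xt j - x j ∈ W) :
    (1 - ρ) * norm1wV w (fun j => xt j - x j) ≤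
      (1 + ρ) * (norm1wV w xt - norm1wV w x + 2 * norm1wV w (restrictTo x Sᶜ))
      + 2 * γ * Real.sqrt k * norm2V (matVec A (fun j => xt j - x j)) := by
  set v : Fin N → V := fun j => xt j - x j with hvdef
  set c := norm1wV w (restrictTo v Sᶜ) with hcdef
  set b := norm1wV w (restrictTo v S) with hbdef
  set n := norm2V (matVec A v) with hndef
  set sk := Real.sqrt k with hskdef
  have hsk : 0 < sk := Real.sqrt_pos.mpr hk
  -- Cauchy-Schwarz: b ≤ sk * norm2V (restrictTo v S)
  have hb0 : 0 ≤ b := by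
    rw [hbdef, norm1w_restrict]
    exact Finset.sum_nonneg fun j _ => mul_nonneg (hw j).le (norm_nonneg _)
  have hSq0 : 0 ≤ ∑ j ∈ S, ‖v j‖ ^ 2 := Finset.sum_nonneg fun j _ => sq_nonneg _
  have hCS := Finset.sum_mul_sq_le_sq_mul_sq S w (fun j => ‖v j‖)
  have hwCS : b ≤ sk * norm2V (restrictTo v S) := by
    have hbsum : b = ∑ j ∈ S, w j * ‖v j‖ := by rw [hbdef, norm1w_restrict]
    have hb2 : b ^ 2 ≤ k * ∑ j ∈ S, ‖v j‖ ^ 2 := by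
      rw [hbsum]
      calc (∑ j ∈ S, w j * ‖v j‖) ^ 2 ≤ (∑ j ∈ S, w j ^ 2) * ∑ j ∈ S, ‖v j‖ ^ 2 := hCS
        _ ≤ k * ∑ j ∈ S, ‖v j‖ ^ 2 := mul_le_mul_of_nonneg_right hS hSq0
    calc b = Real.sqrt (b ^ 2) := (Real.sqrt_sq hb0).symm
      _ ≤ Real.sqrt (k * ∑ j ∈ S, ‖v j‖ ^ 2) := Real.sqrt_le_sqrt hb2
      _ = sk * Real.sqrt (∑ j ∈ S, ‖v j‖ ^ 2) := Real.sqrt_mul hk.le _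
      _ = sk * norm2V (restrictTo v S) := by rw [norm2V, norm2sq_restrict]
  have hNSP := hA v hv S hS
  have hn0 : 0 ≤ n := norm2V_nonneg _
  have hb : b ≤ ρ * c + sk * γ * n := by
    have heq : sk * (ρ / sk * c + γ * n) = ρ * c + sk * γ * n := by
      field_simp
    calc b ≤ sk * norm2V (restrictTo v S) := hwCS
      _ ≤ sk * (ρ / sk * c + γ * n) := mul_le_mul_of_nonneg_left hNSP hsk.le
      _ = ρ * c + sk * γ * n := heq
  -- ℓ¹ estimates
  have hXt := norm1w_split w xt S
  have hX := norm1w_split w x S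
  have hVsplit := norm1w_split w v S
  have a1 : c ≤ norm1wV w (restrictTo xt Sᶜ) + norm1wV w (restrictTo x Sᶜ) := by
    rw [hcdef, norm1w_restrict, norm1w_restrict, norm1w_restrict, ← Finset.sum_add_distrib]
    apply Finset.sum_le_sum
    intro j _
    have h := norm_sub_le (xt j) (x j)
    have : w j * ‖v j‖ ≤ w j * (‖xt j‖ + ‖x j‖) :=
      mul_le_mul_of_nonneg_left h (hw j).le
    linarith [this]
  have a3 : norm1wV w (restrictTo x S) ≤ norm1wV w (restrictTo xt S) + b := by
    rw [hbdef, norm1w_restrict, norm1w_restrict, norm1w_restrict, ← Finset.sum_add_distrib]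
    apply Finset.sum_le_sum
    intro j _
    have h1 : ‖x j‖ - ‖xt j‖ ≤ ‖x j - xt j‖ := norm_sub_norm_le _ _
    have h2 : ‖x j - xt j‖ = ‖v j‖ := by rw [hvdef]; exact norm_sub_rev _ _
    have : ‖x j‖ ≤ ‖xt j‖ + ‖v j‖ := by linarith
    calc w j * ‖x j‖ ≤ w j * (‖xt j‖ + ‖v j‖) := mul_le_mul_of_nonneg_left this (hw j).le
      _ = w j * ‖xt j‖ + w j * ‖v j‖ := by ring
  have hcD : (1 - ρ) * c ≤
      (norm1wV w xt - norm1wV w x + 2 * norm1wV w (restrictTo x Sᶜ)) + sk * γ * n := by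
    nlinarith [a1, a3, hXt, hX, hb]
  have hgoal : norm1wV w v = b + c := hVsplit
  rw [show norm1wV w (fun j => xt j - x j) = norm1wV w v from rfl, hgoal]
  have h1 := mul_le_mul_of_nonneg_left hb (by linarith : (0:ℝ) ≤ 1 - ρ)
  have h2 := mul_le_mul_of_nonneg_left hcD (by linarith : (0:ℝ) ≤ 1 + ρ)
  nlinarith [h1, h2]

set_option maxHeartbeats 1000000 in
/-- Lemma 6.1 (weighted rNSP implies error bounds for inexact minimizers), `ℓ²`-bound. -/
theorem wrNSP_error_bound_l2
    {V : Type*} [NormedAddCommGroup V] [NormedSpace ℝ V] [CompleteSpace V]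
    (W : Subspace ℝ V) (hWclosed : IsClosed (W : Set V))
    {m N : ℕ} (A : Matrix (Fin m) (Fin N) ℝ)
    (w : Fin N → ℝ) (hw : ∀ j, 0 < w j)
    (k : ℝ) (hk : 0 < k)
    (ρ γ : ℝ) (hρ0 : 0 ≤ ρ) (hρ1 : ρ < 1) (hγ : 0 < γ)
    (hA : WRNSP A (W : Set V) k w ρ γ)
    (x : Fin N → V) (hx : ∀ j, x j ∈ W)
    (f : Fin m → V)
    (e : Fin m → V) (he : e = fun i => matVec A x i - f i)
    (lam : ℝ) (hlam0 : 0 < lam)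
    (hlam : lam ≤ (1 + ρ) ^ 2 / ((3 + ρ) * γ * Real.sqrt k))
    (G : (Fin N → V) → ℝ)
    (hG : ∀ z, G z = lam * norm1wV w z + norm2V (fun i => matVec A z i - f i))
    (xt : Fin N → V) (hxt : ∀ j, xt j ∈ W) :
    norm2V (fun j => xt j - x j) ≤
      (1 + ρ) ^ 2 / (1 - ρ) / Real.sqrt k
          * (2 * sigmaK w k x + (G xt - G x) / lam)
        + ((1 + ρ) ^ 2 / (1 - ρ) / (Real.sqrt k * lam) + (3 + ρ) * γ / (1 - ρ)) * norm2V e := by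
  set sk := Real.sqrt k with hskdef
  have hsk : 0 < sk := Real.sqrt_pos.mpr hk
  set v : Fin N → V := fun j => xt j - x j with hvdef
  have hv : ∀ j, v j ∈ W := fun j => sub_mem (hxt j) (hx j)
  -- attainment of sigmaK
  set 𝒮 : Set ℝ :=
    {t : ℝ | ∃ S : Finset (Fin N), wCard w S ≤ k ∧ t = norm1wV w (restrictTo x Sᶜ)} with hSdef
  have hne𝒮 : 𝒮.Nonempty :=
    ⟨norm1wV w (restrictTo x (∅ : Finset (Fin N))ᶜ), ⟨∅, by simp [wCard, hk.le], rfl⟩⟩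
  have hfin : 𝒮.Finite := by
    apply (Set.finite_range (fun S : Finset (Fin N) => norm1wV w (restrictTo x Sᶜ))).subset
    rintro t ⟨S, -, ht⟩
    exact ⟨S, ht.symm⟩
  have hmem : sInf 𝒮 ∈ 𝒮 := hne𝒮.csInf_mem hfin
  obtain ⟨S₀, hS₀k, hσeq⟩ := hmem
  have hσ : sigmaK w k x = norm1wV w (restrictTo x S₀ᶜ) := hσeq
  set σ := sigmaK w k x with hσdef
  -- abbreviations
  set L := norm1wV w v with hLdef
  set nv := norm2V v with hnvdef
  set nav := norm2V (matVec A v) with hnavdef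
  set r := norm2V (fun i => matVec A xt i - f i) with hrdef
  set nE := norm2V e with hnEdef
  have hr0 : 0 ≤ r := norm2V_nonneg _
  have hnE0 : 0 ≤ nE := norm2V_nonneg _
  set Δ := norm1wV w xt - norm1wV w x with hΔdef
  -- F1
  have F1 : nv ≤ (1 + ρ) / sk * L + γ * nav :=
    claimB A (W : Set V) w hw k hk ρ γ hρ0 hγ.le hA v hv
  -- F2
  have F2 : (1 - ρ) * L ≤ (1 + ρ) * (Δ + 2 * σ) + 2 * γ * sk * nav := by
    have := claimA A (W : Set V) w hw k hk ρ γ hρ0 hρ1 hγ.le hA S₀ hS₀k x xt hv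
    rw [hσ]
    exact this
  -- F3 : nav ≤ r + nE
  have hAveq : matVec A v = fun i => (matVec A xt i - f i) + -(e i) := by
    funext i
    rw [he]
    simp only [matVec, hvdef, smul_sub, Finset.sum_sub_distrib]
    abel
  have F3 : nav ≤ r + nE := by
    rw [hnavdef, hAveq]
    have h1 := norm2V_triangle (fun i => matVec A xt i - f i) (fun i => -(e i))
    have h2 : norm2V (fun i => -(e i)) = nE := by
      rw [hnEdef]; unfold norm2V; simp [norm_neg]
    rw [h2] at h1
    exact h1
  -- F4 : lam * Δ = (G xt - G x) + nE - r
  have F4 : lam * Δ = (G xt - G x) + nE - r := by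
    have hGx : G x = lam * norm1wV w x + nE := by
      rw [hG x, hnEdef, he]
    have hGxt : G xt = lam * norm1wV w xt + r := by rw [hG xt, hrdef]
    rw [hΔdef]; rw [hGx, hGxt]; ring
  -- F5
  have hden : 0 < (3 + ρ) * γ * sk := by positivity
  have F5 : lam * ((3 + ρ) * γ * sk) ≤ (1 + ρ) ^ 2 := by
    have := (le_div_iff₀ hden).mp hlam
    linarith
  -- key inequality, cleared of denominators
  have step1 : sk * nv ≤ (1 + ρ) * L + γ * sk * nav := by
    have h := mul_le_mul_of_nonneg_left F1 hsk.le
    have heq : sk * ((1 + ρ) / sk * L + γ * nav) = (1 + ρ) * L + γ * sk * nav := by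
      field_simp
    linarith [heq ▸ h]
  have h1ρ : (0:ℝ) ≤ 1 - ρ := by linarith
  have step2 := mul_le_mul_of_nonneg_left step1 (mul_nonneg hlam0.le h1ρ)
  have step3 := mul_le_mul_of_nonneg_left F2
    (mul_nonneg hlam0.le (by linarith : (0:ℝ) ≤ 1 + ρ))
  have step4 := mul_le_mul_of_nonneg_left F3
    (by positivity : (0:ℝ) ≤ lam * γ * sk * (3 + ρ))
  have step5 := mul_le_mul_of_nonneg_right F5 hr0
  have F4' : (1 + ρ) ^ 2 * (lam * Δ) = (1 + ρ) ^ 2 * ((G xt - G x) + nE - r) := by rw [F4]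
  have key : (1 - ρ) * sk * lam * nv ≤
      (1 + ρ) ^ 2 * (lam * (2 * σ) + (G xt - G x))
      + ((1 + ρ) ^ 2 + (3 + ρ) * γ * sk * lam) * nE := by
    linarith [step2, step3, step4, step5, F4']
  have hdenpos : 0 < (1 - ρ) * sk * lam := by
    apply mul_pos (mul_pos (by linarith) hsk) hlam0
  have hne1ρ : (1:ℝ) - ρ ≠ 0 := ne_of_gt (by linarith)
  have heqR : ((1 - ρ) * sk * lam) *
      ((1 + ρ) ^ 2 / (1 - ρ) / sk * (2 * σ + (G xt - G x) / lam)
        + ((1 + ρ) ^ 2 / (1 - ρ) / (sk * lam) + (3 + ρ) * γ / (1 - ρ)) * nE)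
      = (1 + ρ) ^ 2 * (lam * (2 * σ) + (G xt - G x))
        + ((1 + ρ) ^ 2 + (3 + ρ) * γ * sk * lam) * nE := by
    field_simp [hne1ρ, hsk.ne', hlam0.ne']
  have hfin2 : ((1 - ρ) * sk * lam) * nv ≤ ((1 - ρ) * sk * lam) *
      ((1 + ρ) ^ 2 / (1 - ρ) / sk * (2 * σ + (G xt - G x) / lam)
        + ((1 + ρ) ^ 2 / (1 - ρ) / (sk * lam) + (3 + ρ) * γ / (1 - ρ)) * nE) := by
    rw [heqR]
    linarith [key]
  exact le_of_mul_le_mul_left hfin2 hdenpos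
end
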